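/- Let k be an integer and let G be a finite simple graph with Δ(G) ≤ k such that the square of every proper subgraph of G is list (k+1)-colorable. Suppose G contains distinct vertices w₁, u₁, u₂, w₂ with edges w₁u₁, u₁u₂, u₂w₂, such that d(u₁) = d(u₂) = 2, d(w₁) ≤ k − 1 and d(w₂) ≤ k − 2. Then the square of G is list (k+1)-colorable. -/

import Mathlib

open SimpleGraph

def SimpleGraph.square {V : Type*} (G : SimpleGraph V) : SimpleGraph V where
  Adj u v := u ≠ v ∧ (G.Adj u v ∨ ∃ w, G.Adj u w ∧ G.Adj w v)
  symm := by
    constructor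
    rintro u v ⟨h, hadj | ⟨w, h1, h2⟩⟩
    · exact ⟨Ne.symm h, Or.inl hadj.symm⟩
    · exact ⟨Ne.symm h, Or.inr ⟨w, h2.symm, h1.symm⟩⟩
  loopless := ⟨fun v h => h.1 rfl⟩

/-- `G` is list `k`-colorable. -/
def SimpleGraph.IsListColorable {V : Type*} (G : SimpleGraph V) (k : ℕ) : Prop :=
  ∀ L : V → Finset ℕ, (∀ v, (L v).card = k) →
    ∃ c : V → ℕ, (∀ v, c v ∈ L v) ∧ ∀ u v, G.Adj u v → c u ≠ c v

noncomputable def deg {V : Type*} (G : SimpleGraph V) (v : V) : ℕ :=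
  (G.neighborSet v).ncard

noncomputable def maxDeg {V : Type*} [Fintype V] (G : SimpleGraph V) : ℕ :=
  Finset.univ.sup (deg G)

noncomputable def chi2l {V : Type*} (G : SimpleGraph V) : ℕ :=
  sInf {k | (G.square).IsListColorable k}

def madLT {V : Type*} (G : SimpleGraph V) (m : ℝ) : Prop :=
  ∀ H : G.Subgraph, H.verts.Nonempty →
    2 * (H.edgeSet.ncard : ℝ) < m * (H.verts.ncard : ℝ)


theorem statement5 (k : ℕ) (V : Type) [Fintype V] (G : SimpleGraph V)
    (hΔ : maxDeg G ≤ k)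
    (hmin : ∀ H : G.Subgraph, H ≠ ⊤ → ((H.coe).square).IsListColorable (k + 1))
    (w₁ u₁ u₂ w₂ : V)
    (hdist : [w₁, u₁, u₂, w₂].Nodup)
    (h1 : G.Adj w₁ u₁) (h2 : G.Adj u₁ u₂) (h3 : G.Adj u₂ w₂)
    (hu₁ : deg G u₁ = 2) (hu₂ : deg G u₂ = 2)
    (hw₁ : deg G w₁ + 1 ≤ k) (hw₂ : deg G w₂ + 2 ≤ k) :
    (G.square).IsListColorable (k + 1) := by
  classical
  simp only [List.nodup_cons, List.mem_cons, List.mem_singleton, List.not_mem_nil,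
    or_false, not_or, List.nodup_nil, and_true] at hdist
  obtain ⟨⟨hne1, hne2, hne3⟩, ⟨hne4, hne5⟩, hne6, -⟩ := hdist
  -- neighbor sets
  have hNu1 : G.neighborSet u₁ = {w₁, u₂} := by
    refine (Set.eq_of_subset_of_ncard_le ?_ ?_ (Set.toFinite _)).symm
    · intro x hx
      rcases hx with h | h
      · subst h; exact h1.symm
      · simp only [Set.mem_singleton_iff] at h; subst h; exact h2
    · rw [Set.ncard_pair hne2]; exact le_of_eq hu₁
  have hNu2 : G.neighborSet u₂ = {u₁, w₂} := by
    refine (Set.eq_of_subset_of_ncard_le ?_ ?_ (Set.toFinite _)).symm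
    · intro x hx
      rcases hx with h | h
      · subst h; exact h2.symm
      · simp only [Set.mem_singleton_iff] at h; subst h; exact h3
    · rw [Set.ncard_pair hne5]; exact le_of_eq hu₂
  intro L hL
  -- the proper subgraph: delete edge u₁u₂
  set H : G.Subgraph :=
    { verts := Set.univ
      Adj := fun a b => G.Adj a b ∧ ¬((a = u₁ ∧ b = u₂) ∨ (a = u₂ ∧ b = u₁))
      adj_sub := fun h => h.1
      edge_vert := fun _ => Set.mem_univ _
      symm := ⟨fun a b h => ⟨h.1.symm,
        fun hc => h.2 (hc.elim (fun x => Or.inr ⟨x.2, x.1⟩) (fun x => Or.inl ⟨x.2, x.1⟩))⟩⟩ }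
    with hHdef
  have hHadj : ∀ a b : V, H.Adj a b ↔ G.Adj a b ∧ ¬((a = u₁ ∧ b = u₂) ∨ (a = u₂ ∧ b = u₁)) := by
    intro a b; rfl
  have hHne : H ≠ ⊤ := by
    intro h
    have : H.Adj u₁ u₂ := by rw [h]; simpa using h2
    exact this.2 (Or.inl ⟨rfl, rfl⟩)
  obtain ⟨c', hc'mem, hc'adj⟩ := hmin H hHne (fun x => L x.val) (fun x => hL x.val)
  set c0 : V → ℕ := fun v => c' ⟨v, Set.mem_univ v⟩ with hc0def
  have hc0mem : ∀ v, c0 v ∈ L v := fun v => hc'mem ⟨v, Set.mem_univ v⟩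
  -- key: deg in terms of neighborFinset
  have hdegF : ∀ v, (G.neighborFinset v).card = deg G v := by
    intro v
    rw [deg, SimpleGraph.neighborFinset, Set.ncard_eq_toFinset_card']
  -- constraint sets
  set T₁ : Finset V := insert w₁ (insert w₂ ((G.neighborFinset w₁).erase u₁)) with hT1def
  set S₁ : Finset ℕ := T₁.image c0 with hS1def
  have hw1mem : u₁ ∈ G.neighborFinset w₁ := by simpa using h1
  have hw2mem : u₂ ∈ G.neighborFinset w₂ := by simpa using h3.symm
  have hS₁card : S₁.card ≤ k := by
    have e1 : S₁.card ≤ T₁.card := Finset.card_image_le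
    have e2 : T₁.card ≤ (insert w₂ ((G.neighborFinset w₁).erase u₁)).card + 1 :=
      Finset.card_insert_le _ _
    have e3 := Finset.card_insert_le w₂ ((G.neighborFinset w₁).erase u₁)
    have e4 : ((G.neighborFinset w₁).erase u₁).card = (G.neighborFinset w₁).card - 1 :=
      Finset.card_erase_of_mem hw1mem
    have e5 := hdegF w₁
    have h0 : 1 ≤ (G.neighborFinset w₁).card := Finset.card_pos.mpr ⟨u₁, hw1mem⟩
    omega
  have ha₁ : (L u₁ \ S₁).Nonempty := by
    rw [← Finset.card_pos]
    have := Finset.le_card_sdiff S₁ (L u₁)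
    have hcard := hL u₁
    omega
  obtain ⟨a₁, ha₁⟩ := ha₁
  rw [Finset.mem_sdiff] at ha₁
  set T₂ : Finset V := insert w₁ (insert w₂ ((G.neighborFinset w₂).erase u₂)) with hT2def
  set S₂ : Finset ℕ := insert a₁ (T₂.image c0) with hS2def
  have hS₂card : S₂.card ≤ k := by
    have e0 : S₂.card ≤ (T₂.image c0).card + 1 := Finset.card_insert_le _ _
    have e1 : (T₂.image c0).card ≤ T₂.card := Finset.card_image_le
    have e2 : T₂.card ≤ (insert w₂ ((G.neighborFinset w₂).erase u₂)).card + 1 :=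
      Finset.card_insert_le _ _
    have e3 := Finset.card_insert_le w₂ ((G.neighborFinset w₂).erase u₂)
    have e4 : ((G.neighborFinset w₂).erase u₂).card = (G.neighborFinset w₂).card - 1 :=
      Finset.card_erase_of_mem hw2mem
    have e5 := hdegF w₂
    have h0 : 1 ≤ (G.neighborFinset w₂).card := Finset.card_pos.mpr ⟨u₂, hw2mem⟩
    omega
  have ha₂ : (L u₂ \ S₂).Nonempty := by
    rw [← Finset.card_pos]
    have := Finset.le_card_sdiff S₂ (L u₂)
    have hcard := hL u₂
    omega
  obtain ⟨a₂, ha₂⟩ := ha₂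
  rw [Finset.mem_sdiff] at ha₂
  -- final coloring
  set c : V → ℕ := fun v => if v = u₁ then a₁ else if v = u₂ then a₂ else c0 v with hcdef
  have hcu₁ : c u₁ = a₁ := by simp [hcdef]
  have hcu₂ : c u₂ = a₂ := by
    have h : u₂ ≠ u₁ := fun h => hne4 h.symm
    simp [hcdef, h]
  have hcother : ∀ v, v ≠ u₁ → v ≠ u₂ → c v = c0 v := by
    intro v hv1 hv2; simp [hcdef, hv1, hv2]
  -- neighbors of u₁ in G² other than u₂ lie in T₁
  have hnbr1 : ∀ y, (G.square).Adj u₁ y → y ≠ u₂ → y ∈ T₁ := by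
    rintro y ⟨hne, hy | ⟨w, hw1', hw2'⟩⟩ hy2
    · have : y ∈ G.neighborSet u₁ := hy
      rw [hNu1] at this
      rcases this with h | h
      · rw [h]; exact Finset.mem_insert_self _ _
      · exact absurd h hy2
    · have hwm : w ∈ G.neighborSet u₁ := hw1'
      rw [hNu1] at hwm
      rcases hwm with h | h
      · rw [h] at hw2'
        have : y ∈ (G.neighborFinset w₁).erase u₁ :=
          Finset.mem_erase.mpr ⟨fun h => hne h.symm, by simpa using hw2'⟩
        exact Finset.mem_insert_of_mem (Finset.mem_insert_of_mem this)
      · simp only [Set.mem_singleton_iff] at h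
        rw [h] at hw2'
        have hym : y ∈ G.neighborSet u₂ := hw2'
        rw [hNu2] at hym
        rcases hym with h' | h'
        · exact absurd h'.symm hne
        · simp only [Set.mem_singleton_iff] at h'
          rw [h']
          exact Finset.mem_insert_of_mem (Finset.mem_insert_self _ _)
  have hnbr2 : ∀ y, (G.square).Adj u₂ y → y ≠ u₁ → y ∈ T₂ := by
    rintro y ⟨hne, hy | ⟨w, hw1', hw2'⟩⟩ hy1
    · have hym : y ∈ G.neighborSet u₂ := hy
      rw [hNu2] at hym
      rcases hym with h | h
      · exact absurd h hy1
      · simp only [Set.mem_singleton_iff] at h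
        rw [h]
        exact Finset.mem_insert_of_mem (Finset.mem_insert_self _ _)
    · have hwm : w ∈ G.neighborSet u₂ := hw1'
      rw [hNu2] at hwm
      rcases hwm with h | h
      · rw [h] at hw2'
        have hym : y ∈ G.neighborSet u₁ := hw2'
        rw [hNu1] at hym
        rcases hym with h' | h'
        · rw [h']; exact Finset.mem_insert_self _ _
        · simp only [Set.mem_singleton_iff] at h'; exact absurd h'.symm hne
      · simp only [Set.mem_singleton_iff] at h
        rw [h] at hw2'
        have : y ∈ (G.neighborFinset w₂).erase u₂ :=
          Finset.mem_erase.mpr ⟨fun h => hne h.symm, by simpa using hw2'⟩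
        exact Finset.mem_insert_of_mem (Finset.mem_insert_of_mem this)
  -- properness on the untouched part
  have hC : ∀ x y : V, (G.square).Adj x y → x ≠ u₁ → x ≠ u₂ → y ≠ u₁ → y ≠ u₂ →
      c0 x ≠ c0 y := by
    rintro x y ⟨hne, hxy⟩ hx1 hx2 hy1 hy2
    have hsq : ((H.coe).square).Adj ⟨x, Set.mem_univ x⟩ ⟨y, Set.mem_univ y⟩ := by
      refine ⟨fun h => hne (congrArg Subtype.val h), ?_⟩
      rcases hxy with h | ⟨w, hwa, hwb⟩
      · exact Or.inl ⟨h, fun hc => hc.elim (fun p => hx1 p.1) (fun p => hx2 p.1)⟩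
      · refine Or.inr ⟨⟨w, Set.mem_univ w⟩, ?_, ?_⟩
        · exact ⟨hwa, fun hc => hc.elim (fun p => hx1 p.1) (fun p => hx2 p.1)⟩
        · exact ⟨hwb, fun hc => hc.elim (fun p => hy2 p.2) (fun p => hy1 p.2)⟩
    exact hc'adj _ _ hsq
  refine ⟨c, ?_, ?_⟩
  · intro v
    by_cases hv1 : v = u₁
    · subst hv1; rw [hcu₁]; exact ha₁.1
    by_cases hv2 : v = u₂
    · subst hv2; rw [hcu₂]; exact ha₂.1
    · rw [hcother v hv1 hv2]; exact hc0mem v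
  · -- properness
    have main : ∀ x y, (G.square).Adj x y → x = u₁ ∨ x = u₂ → c x ≠ c y := by
      rintro x y hxy (h | h)
      · rw [h] at hxy ⊢
        by_cases hy2 : y = u₂
        · subst hy2; rw [hcu₁, hcu₂]
          intro h; exact ha₂.2 (h ▸ Finset.mem_insert_self _ _)
        · have hy1 : y ≠ u₁ := fun h => hxy.1 h.symm
          rw [hcu₁, hcother y hy1 hy2]
          intro h
          exact ha₁.2 (h ▸ Finset.mem_image_of_mem c0 (hnbr1 y hxy hy2))
      · rw [h] at hxy ⊢
        by_cases hy1 : y = u₁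
        · subst hy1; rw [hcu₂, hcu₁]
          intro h; exact ha₂.2 (h ▸ Finset.mem_insert_self _ _)
        · have hy2 : y ≠ u₂ := fun h => hxy.1 h.symm
          rw [hcu₂, hcother y hy1 hy2]
          intro h
          exact ha₂.2 (h ▸ Finset.mem_insert_of_mem (Finset.mem_image_of_mem c0 (hnbr2 y hxy hy1)))
    intro x y hxy
    by_cases hx : x = u₁ ∨ x = u₂
    · exact main x y hxy hx
    push_neg at hx
    by_cases hy : y = u₁ ∨ y = u₂
    · exact fun h => main y x hxy.symm hy h.symm
    push_neg at hy
    rw [hcother x hx.1 hx.2, hcother y hy.1 hy.2]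
    exact hC x y hxy hx.1 hx.2 hy.1 hy.2
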